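/- The map θ from the fundamental group (at basepoint vertex 0) of the graph of groups over the k-cycle Δ_k (vertex groups V_i ≅ V, edge groups E_i ≅ E, attaching maps copies f_i, g_i of f,g) to the HNN extension G = ⟨V, t | t⁻¹f(e)t = g(e)⟩, defined by sending each v ∈ V_i to the corresponding v ∈ V and each stable letter t_i to t, is an injective group homomorphism whose image equals the kernel of ρ: G → ℤ/k (ρ(V)=0, ρ(t)=1). -/

import Mathlib

/-- The defining relations for the fundamental group of a graph of groups (relative to a
spanning "tree" set `T` of edges), presented on generators `(Σ i, Gv i) ⊕ ε`: vertex-group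
multiplication relations, conjugation relations `t_e⁻¹ ι_e(x) t_e = τ_e(x)` for every edge,
and the relations killing the stable letters of tree edges. -/
def gogRels {ι ε : Type*} (Gv : ι → Type*) [∀ i, Group (Gv i)]
    (Ge : ε → Type*) [∀ e, Group (Ge e)]
    (a b : ε → ι) (fa : ∀ e, Ge e →* Gv (a e)) (fb : ∀ e, Ge e →* Gv (b e))
    (T : Set ε) : Set (FreeGroup ((Σ i, Gv i) ⊕ ε)) :=
  {r | (∃ (i : ι) (v w : Gv i),
          r = FreeGroup.of (Sum.inl ⟨i, v⟩) * FreeGroup.of (Sum.inl ⟨i, w⟩) *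
              (FreeGroup.of (Sum.inl ⟨i, v * w⟩))⁻¹) ∨
       (∃ (e : ε) (x : Ge e),
          r = (FreeGroup.of (Sum.inr e))⁻¹ * FreeGroup.of (Sum.inl ⟨a e, fa e x⟩) *
              FreeGroup.of (Sum.inr e) * (FreeGroup.of (Sum.inl ⟨b e, fb e x⟩))⁻¹) ∨
       (∃ e ∈ T, r = FreeGroup.of (Sum.inr e))}

/-- The fundamental group of a graph of groups, relative to a spanning tree `T`. -/
def gogPi1 {ι ε : Type*} (Gv : ι → Type*) [∀ i, Group (Gv i)]
    (Ge : ε → Type*) [∀ e, Group (Ge e)]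
    (a b : ε → ι) (fa : ∀ e, Ge e →* Gv (a e)) (fb : ∀ e, Ge e →* Gv (b e))
    (T : Set ε) : Type _ :=
  PresentedGroup (gogRels Gv Ge a b fa fb T)

instance {ι ε : Type*} (Gv : ι → Type*) [∀ i, Group (Gv i)]
    (Ge : ε → Type*) [∀ e, Group (Ge e)]
    (a b : ε → ι) (fa : ∀ e, Ge e →* Gv (a e)) (fb : ∀ e, Ge e →* Gv (b e))
    (T : Set ε) : Group (gogPi1 Gv Ge a b fa fb T) :=
  inferInstanceAs (Group (PresentedGroup _))

namespace Stmt13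

variable {V E : Type*} [Group V] [Group E] (f g : E →* V) (k : ℕ)

abbrev P : Type _ := gogPi1 (ι := ZMod k) (ε := ZMod k) (fun _ => V) (fun _ => E)
    (fun i => i) (fun i => i + 1) (fun _ => f) (fun _ => g) {e | e ≠ -1}

def av (i : ZMod k) (v : V) : P f g k := PresentedGroup.of (Sum.inl ⟨i, v⟩)

def tE (e : ZMod k) : P f g k := PresentedGroup.of (Sum.inr e)

def sv : P f g k := tE f g k (-1)

theorem rel_eq_one {r : FreeGroup ((Σ _ : ZMod k, V) ⊕ ZMod k)}
    (hr : r ∈ gogRels (ι := ZMod k) (ε := ZMod k) (fun _ => V) (fun _ => E)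
      (fun i => i) (fun i => i + 1) (fun _ => f) (fun _ => g) {e | e ≠ -1}) :
    (PresentedGroup.mk _ r : P f g k) = 1 :=
  (QuotientGroup.eq_one_iff r).2 (Subgroup.subset_normalClosure hr)

theorem av_mul (i : ZMod k) (v w : V) :
    av f g k i v * av f g k i w = av f g k i (v * w) := by
  have h := rel_eq_one f g k (Or.inl ⟨i, v, w, rfl⟩)
  rw [map_mul, map_mul, map_inv, mul_inv_eq_one] at h
  exact h

def avh (i : ZMod k) : V →* P f g k :=
  MonoidHom.mk' (av f g k i) (fun v w => (av_mul f g k i v w).symm)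

theorem av_one (i : ZMod k) : av f g k i 1 = 1 := (avh f g k i).map_one

theorem av_inv (i : ZMod k) (v : V) : av f g k i v⁻¹ = (av f g k i v)⁻¹ :=
  (avh f g k i).map_inv v

theorem tree_eq_one {e : ZMod k} (he : e ≠ -1) : tE f g k e = 1 :=
  rel_eq_one f g k (Or.inr (Or.inr ⟨e, he, rfl⟩))

theorem conj_rel (e : ZMod k) (x : E) :
    (tE f g k e)⁻¹ * av f g k e (f x) * tE f g k e = av f g k (e + 1) (g x) := by
  have h := rel_eq_one f g k (Or.inr (Or.inl ⟨e, x, rfl⟩))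
  rw [map_mul, map_mul, map_mul, map_inv, map_inv, mul_inv_eq_one] at h
  exact h

theorem tree_rel {e : ZMod k} (he : e ≠ -1) (x : E) :
    av f g k e (f x) = av f g k (e + 1) (g x) := by
  have h := conj_rel f g k e x
  rw [tree_eq_one f g k he] at h
  simpa using h

theorem conj_sv (x : E) :
    (sv f g k)⁻¹ * av f g k (-1) (f x) * sv f g k = av f g k 0 (g x) := by
  have h := conj_rel f g k (-1) x
  rw [neg_add_cancel] at h
  exact h

section H1

variable (H1 : ∀ x : E, ∃ y : E, f y = g x ∧ g y = f x)

include H1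

theorem rev_rel {m : ZMod k} (hm : m ≠ 0) (x : E) :
    av f g k m (f x) = av f g k (m - 1) (g x) := by
  obtain ⟨y, h1, h2⟩ := H1 x
  have hne : m - 1 ≠ -1 := by
    intro h; apply hm; linear_combination h
  calc av f g k m (f x) = av f g k m (g y) := by rw [h2]
    _ = av f g k (m - 1) (f y) := by
        have := tree_rel f g k hne y
        rw [sub_add_cancel] at this
        exact this.symm
    _ = av f g k (m - 1) (g x) := by rw [h1]

theorem rev_rel0 (x : E) :
    sv f g k * av f g k 0 (f x) = av f g k (-1) (g x) * sv f g k := by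
  obtain ⟨y, h1, h2⟩ := H1 x
  have h := conj_sv f g k y
  rw [h2] at h
  rw [← h, h1]
  group

end H1

def tau : Equiv.Perm (ZMod k × P f g k) where
  toFun p := (p.1 + 1, (if p.1 = 0 then sv f g k else 1) * p.2)
  invFun p := (p.1 - 1, (if p.1 - 1 = 0 then sv f g k else 1)⁻¹ * p.2)
  left_inv p := by
    obtain ⟨i, r⟩ := p
    show (i + 1 - 1, (if i + 1 - 1 = 0 then sv f g k else 1)⁻¹ *
      ((if i = 0 then sv f g k else 1) * r)) = (i, r)
    rw [add_sub_cancel_right, inv_mul_cancel_left]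
  right_inv p := by
    obtain ⟨i, r⟩ := p
    show (i - 1 + 1, (if i - 1 = 0 then sv f g k else 1) *
      ((if i - 1 = 0 then sv f g k else 1)⁻¹ * r)) = (i, r)
    rw [sub_add_cancel, mul_inv_cancel_left]

@[simp] theorem tau_apply (p : ZMod k × P f g k) :
    tau f g k p = (p.1 + 1, (if p.1 = 0 then sv f g k else 1) * p.2) := rfl

@[simp] theorem tau_inv_apply (p : ZMod k × P f g k) :
    (tau f g k)⁻¹ p = (p.1 - 1, (if p.1 - 1 = 0 then sv f g k else 1)⁻¹ * p.2) := rfl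

def sigma : V →* Equiv.Perm (ZMod k × P f g k) :=
  MonoidHom.mk' (fun v =>
    { toFun := fun p => (p.1, av f g k (-p.1) v * p.2)
      invFun := fun p => (p.1, av f g k (-p.1) v⁻¹ * p.2)
      left_inv := fun p => by
        simp [av_inv, inv_mul_cancel_left]
      right_inv := fun p => by
        simp [av_inv, mul_inv_cancel_left] })
    (fun v w => by
      ext p
      · rfl
      · show (av f g k (-p.1) (v * w) * p.2 : P f g k) = av f g k (-p.1) v * (av f g k (-p.1) w * p.2)
        rw [← av_mul, mul_assoc])

@[simp] theorem sigma_apply (v : V) (p : ZMod k × P f g k) :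
    sigma f g k v p = (p.1, av f g k (-p.1) v * p.2) := rfl

section Action

variable (φ : f.range ≃* g.range)
variable (H1 : ∀ x : E, ∃ y : E, f y = g x ∧ g y = f x)
variable (hφ : ∀ e : E, (φ ⟨f e, ⟨e, rfl⟩⟩ : V) = g e)

include H1 hφ in
theorem lift_cond :
    ∀ a : f.range, tau f g k * sigma f g k ↑a = sigma f g k ↑(φ a) * tau f g k := by
  rintro ⟨-, e, rfl⟩
  have h2 : ((φ ⟨f e, ⟨e, rfl⟩⟩ : g.range) : V) = g e := hφ e
  rw [h2]
  refine Equiv.ext fun p => ?_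
  obtain ⟨i, r⟩ := p
  by_cases hi : i = 0
  · subst hi
    simp only [Equiv.Perm.mul_apply, sigma_apply, tau_apply, if_pos rfl, neg_zero]
    refine Prod.ext rfl ?_
    show sv f g k * (av f g k 0 (f e) * r) = av f g k (-(0+1)) (g e) * (sv f g k * r)
    rw [← mul_assoc, rev_rel0 f g k H1 e, mul_assoc]
    norm_num
  · simp only [Equiv.Perm.mul_apply, sigma_apply, tau_apply, if_neg hi, one_mul]
    refine Prod.ext rfl ?_
    show av f g k (-i) (f e) * r = av f g k (-(i+1)) (g e) * r
    rw [rev_rel f g k H1 (neg_ne_zero.2 hi) e]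
    congr 2
    ring

noncomputable def Phi : HNNExtension V f.range g.range φ →* Equiv.Perm (ZMod k × P f g k) :=
  HNNExtension.lift (sigma f g k) (tau f g k) (lift_cond f g k φ H1 hφ)

@[simp] theorem Phi_of (v : V) : Phi f g k φ H1 hφ (HNNExtension.of v) = sigma f g k v :=
  HNNExtension.lift_of _ _ _ _

@[simp] theorem Phi_t : Phi f g k φ H1 hφ HNNExtension.t = tau f g k :=
  HNNExtension.lift_t _ _ _

theorem tup (m : ℕ) : ∀ (i : ZMod k) (r : P f g k), (∀ l : ℕ, l < m → i + (l : ZMod k) ≠ 0) →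
    ((tau f g k) ^ m) (i, r) = (i + (m : ZMod k), r) := by
  induction m with
  | zero => intro i r _; simp
  | succ n ih =>
    intro i r h
    have h0 : i ≠ 0 := by simpa using h 0 (Nat.succ_pos n)
    rw [pow_succ, Equiv.Perm.mul_apply]
    have ht : tau f g k (i, r) = (i + 1, r) := by
      simp [if_neg h0]
    rw [ht, ih (i + 1) r ?_]
    · refine Prod.ext ?_ rfl
      show i + 1 + (n : ZMod k) = i + ((n + 1 : ℕ) : ZMod k)
      push_cast; ring
    · intro l hl hc
      refine h (l + 1) (by omega) ?_
      push_cast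
      linear_combination hc

theorem tdown (m : ℕ) : ∀ (i : ZMod k) (r : P f g k),
    (∀ l : ℕ, l < m → i - (l : ZMod k) - 1 ≠ 0) →
    (((tau f g k)⁻¹) ^ m) (i, r) = (i - (m : ZMod k), r) := by
  induction m with
  | zero => intro i r _; simp
  | succ n ih =>
    intro i r h
    have h0 : i - 1 ≠ 0 := by simpa using h 0 (Nat.succ_pos n)
    rw [pow_succ, Equiv.Perm.mul_apply]
    have ht : (tau f g k)⁻¹ (i, r) = (i - 1, r) := by
      simp [if_neg h0]
    rw [ht, ih (i - 1) r ?_]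
    · refine Prod.ext ?_ rfl
      show i - 1 - (n : ZMod k) = i - ((n + 1 : ℕ) : ZMod k)
      push_cast; ring
    · intro l hl hc
      refine h (l + 1) (by omega) ?_
      push_cast
      linear_combination hc

theorem aff (x : HNNExtension V f.range g.range φ) :
    ∀ i : ZMod k, ∃ (u : ZMod k) (c : P f g k), ∀ r : P f g k,
      Phi f g k φ H1 hφ x (i, r) = (u, c * r) := by
  induction x using HNNExtension.induction_on with
  | of v => intro i; exact ⟨i, av f g k (-i) v, fun r => by simp⟩
  | t => intro i; exact ⟨i + 1, if i = 0 then sv f g k else 1, fun r => by simp⟩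
  | mul x y ihx ihy =>
    intro i
    obtain ⟨u1, c1, h1⟩ := ihy i
    obtain ⟨u2, c2, h2⟩ := ihx u1
    exact ⟨u2, c2 * c1, fun r => by
      rw [map_mul, Equiv.Perm.mul_apply, h1, h2, mul_assoc]⟩
  | inv x ih =>
    intro i
    obtain ⟨j, c₀, hjc⟩ : ∃ j c₀, Phi f g k φ H1 hφ x⁻¹ (i, 1) = (j, c₀) :=
      ⟨_, _, rfl⟩
    obtain ⟨u, c, h⟩ := ih j
    have hx : Phi f g k φ H1 hφ x (j, c₀) = (i, 1) := by
      rw [← hjc, map_inv, Equiv.Perm.coe_inv, Equiv.apply_symm_apply]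
    rw [h c₀] at hx
    obtain ⟨hu, hc⟩ : u = i ∧ c * c₀ = 1 := by
      simpa [Prod.ext_iff] using hx
    refine ⟨j, c₀, fun r => Equiv.injective (Phi f g k φ H1 hφ x) ?_⟩
    rw [map_inv, Equiv.Perm.coe_inv, Equiv.apply_symm_apply, h, ← mul_assoc, hc, one_mul, hu]

theorem key (hk : 0 < k)
    (θ : P f g k →* HNNExtension V f.range g.range φ)
    (hθv : ∀ (i : ZMod k) (v : V), θ (av f g k i v) =
      HNNExtension.t ^ (i.val : ℤ) * HNNExtension.of v * HNNExtension.t ^ (-(i.val : ℤ)))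
    (hθt : θ (sv f g k) = HNNExtension.t ^ (k : ℤ)) :
    ∀ p : P f g k, Phi f g k φ H1 hφ (θ p) ((0 : ZMod k), (1 : P f g k)) = (0, p) := by
  haveI : NeZero k := ⟨hk.ne'⟩
  intro p
  refine PresentedGroup.generated_by _
    { carrier := {p : P f g k | Phi f g k φ H1 hφ (θ p) ((0 : ZMod k), (1 : P f g k)) = (0, p)},
      one_mem' := ?_, mul_mem' := ?_, inv_mem' := ?_ } ?_ p
  · intro (a : P f g k) (b : P f g k) ha hb
    replace ha : Phi f g k φ H1 hφ (θ a) ((0 : ZMod k), (1 : P f g k)) = (0, a) := ha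
    replace hb : Phi f g k φ H1 hφ (θ b) ((0 : ZMod k), (1 : P f g k)) = (0, b) := hb
    show Phi f g k φ H1 hφ (θ (a * b)) ((0 : ZMod k), (1 : P f g k)) = (0, a * b)
    obtain ⟨u, c, h⟩ := aff f g k φ H1 hφ (θ a) 0
    have h2 := h 1
    rw [mul_one, ha] at h2
    obtain ⟨hu, hc⟩ : (0 : ZMod k) = u ∧ a = c := by simpa [Prod.ext_iff, Prod.mk.injEq] using h2
    rw [map_mul, map_mul, Equiv.Perm.mul_apply, hb, h b, ← hu, ← hc]
  · show Phi f g k φ H1 hφ (θ 1) ((0 : ZMod k), (1 : P f g k)) = (0, 1)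
    rw [map_one, map_one]; rfl
  · intro (a : P f g k) ha
    replace ha : Phi f g k φ H1 hφ (θ a) ((0 : ZMod k), (1 : P f g k)) = (0, a) := ha
    show Phi f g k φ H1 hφ (θ a⁻¹) ((0 : ZMod k), (1 : P f g k)) = (0, a⁻¹)
    obtain ⟨u, c, h⟩ := aff f g k φ H1 hφ (θ a) 0
    have h2 := h 1
    rw [mul_one, ha] at h2
    obtain ⟨hu, hc⟩ : (0 : ZMod k) = u ∧ a = c := by simpa [Prod.ext_iff, Prod.mk.injEq] using h2
    have hinv : Phi f g k φ H1 hφ (θ a) ((0 : ZMod k), a⁻¹) = (0, 1) := by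
      rw [h a⁻¹, ← hu, ← hc, mul_inv_cancel]
    rw [map_inv, map_inv, Equiv.Perm.inv_def]
    rw [Equiv.symm_apply_eq]
    exact hinv.symm
  · rintro (⟨j, v⟩ | e)
    · show Phi f g k φ H1 hφ (θ (av f g k j v)) ((0 : ZMod k), (1 : P f g k)) = (0, av f g k j v)
      rw [hθv j v, map_mul, map_mul, map_zpow, map_zpow, Phi_of, Phi_t,
        Equiv.Perm.mul_apply, Equiv.Perm.mul_apply]
      have hdown : ((tau f g k) ^ (-(j.val : ℤ))) ((0 : ZMod k), (1 : P f g k)) =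
          (0 - (j.val : ZMod k), 1) := by
        rw [zpow_neg, zpow_natCast, ← inv_pow]
        refine tdown f g k j.val 0 1 ?_
        intro l hl hc
        have hlk : ((l + 1 : ℕ) : ZMod k) = 0 := by push_cast; linear_combination -hc
        rw [ZMod.natCast_eq_zero_iff] at hlk
        have h1 := Nat.le_of_dvd (Nat.succ_pos l) hlk
        have h2 := ZMod.val_lt j
        omega
      rw [hdown, sigma_apply, zpow_natCast]
      have hup : ((tau f g k) ^ j.val)
          ((0 - (j.val : ZMod k) : ZMod k), av f g k (-(0 - (j.val : ZMod k))) v * 1) =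
          (0 - (j.val : ZMod k) + (j.val : ZMod k), av f g k (-(0 - (j.val : ZMod k))) v * 1) := by
        refine tup f g k j.val _ _ ?_
        intro l hl hc
        have hlj : (l : ZMod k) = (j.val : ZMod k) := by linear_combination hc
        have h2 := congrArg ZMod.val hlj
        rw [ZMod.val_cast_of_lt (lt_trans hl (ZMod.val_lt j)),
          ZMod.val_cast_of_lt (ZMod.val_lt j)] at h2
        omega
      rw [hup]
      have hfib : (0 - (j.val : ZMod k) + (j.val : ZMod k) : ZMod k) = 0 := by ring
      have hlab : (-(0 - (j.val : ZMod k)) : ZMod k) = j := by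
        rw [ZMod.natCast_zmod_val]; ring
      rw [hfib, hlab, mul_one]
    · by_cases he : e = -1
      · subst he
        show Phi f g k φ H1 hφ (θ (sv f g k)) ((0 : ZMod k), (1 : P f g k)) = (0, sv f g k)
        rw [hθt, map_zpow, Phi_t, zpow_natCast]
        have hsplit : (tau f g k) ^ k = (tau f g k) ^ (k - 1) * tau f g k := by
          rw [← pow_succ]
          congr 1
          omega
        rw [hsplit, Equiv.Perm.mul_apply]
        have h1 : tau f g k ((0 : ZMod k), (1 : P f g k)) = (1, sv f g k) := by
          simp
        rw [h1]
        have h2 : ((tau f g k) ^ (k - 1)) ((1 : ZMod k), sv f g k) =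
            (1 + ((k - 1 : ℕ) : ZMod k), sv f g k) := by
          refine tup f g k (k - 1) _ _ ?_
          intro l hl hc
          have hlk : ((l + 1 : ℕ) : ZMod k) = 0 := by push_cast; linear_combination hc
          rw [ZMod.natCast_eq_zero_iff] at hlk
          have := Nat.le_of_dvd (Nat.succ_pos l) hlk
          omega
        rw [h2]
        have h3 : (1 + ((k - 1 : ℕ) : ZMod k) : ZMod k) = 0 := by
          rw [Nat.cast_sub (by omega : 1 ≤ k), Nat.cast_one, ZMod.natCast_self]
          ring
        rw [h3]
      · have h1 : (PresentedGroup.of (Sum.inr e) : P f g k) = (1 : P f g k) := tree_eq_one f g k he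
        show Phi f g k φ H1 hφ (θ (PresentedGroup.of (Sum.inr e) : P f g k)) ((0 : ZMod k), (1 : P f g k)) =
          (0, PresentedGroup.of (Sum.inr e))
        rw [h1, θ.map_one, map_one]; rfl

end Action

section ZModHelpers

theorem castk1 (hk : 0 < k) : ((k - 1 : ℕ) : ZMod k) = -1 := by
  rw [Nat.cast_sub (by omega : 1 ≤ k), Nat.cast_one, ZMod.natCast_self, zero_sub]

theorem valneg1 (hk : 0 < k) : (-1 : ZMod k).val = k - 1 := by
  rw [← castk1 k hk, ZMod.val_cast_of_lt (by omega)]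

theorem valsucc (hk : 0 < k) {j : ZMod k} (hj : j ≠ -1) : (j + 1).val = j.val + 1 := by
  haveI : NeZero k := ⟨hk.ne'⟩
  rcases eq_or_ne k 1 with h1 | h1
  · subst h1; exact absurd (Subsingleton.elim _ _) hj
  · haveI := Fact.mk (show 1 < k by omega)
    have hlt := ZMod.val_lt j
    have hne : j.val ≠ k - 1 := by
      intro h2
      apply hj
      rw [← ZMod.natCast_zmod_val j, h2, castk1 k hk]
    rw [ZMod.val_add, ZMod.val_one, Nat.mod_eq_of_lt (by omega)]

end ZModHelpers

section Theta

variable (φ : f.range ≃* g.range) (hk : 0 < k)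
variable (θ : P f g k →* HNNExtension V f.range g.range φ)
variable (hθv : ∀ (i : ZMod k) (v : V), θ (av f g k i v) =
  HNNExtension.t ^ (i.val : ℤ) * HNNExtension.of v * HNNExtension.t ^ (-(i.val : ℤ)))
variable (hθt : θ (sv f g k) = HNNExtension.t ^ (k : ℤ))

include hk hθv in
theorem theta_av_zero (v : V) : θ (av f g k 0 v) = HNNExtension.of v := by
  haveI : NeZero k := ⟨hk.ne'⟩
  have h := hθv 0 v
  rw [ZMod.val_zero] at h
  simpa using h

include hk hθv in
theorem theta_av_negone (v : V) : θ (av f g k (-1) v) =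
    HNNExtension.t ^ ((k - 1 : ℕ) : ℤ) * HNNExtension.of v *
      HNNExtension.t ^ (-((k - 1 : ℕ) : ℤ)) := by
  have h := hθv (-1) v
  rw [valneg1 k hk] at h
  exact h

include hk hθv hθt in
theorem conj_t_range (p : P f g k) :
    HNNExtension.t * θ p * HNNExtension.t⁻¹ ∈ θ.range := by
  haveI : NeZero k := ⟨hk.ne'⟩
  refine PresentedGroup.generated_by _
    (Subgroup.comap θ (Subgroup.comap (MulAut.conj HNNExtension.t).toMonoidHom θ.range)) ?_ p
  rintro (⟨j, v⟩ | e) <;>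
    simp only [Subgroup.mem_comap, MulEquiv.coe_toMonoidHom, MulAut.conj_apply]
  · show HNNExtension.t * θ (av f g k j v) * HNNExtension.t⁻¹ ∈ θ.range
    rw [hθv j v]
    by_cases hj : j = -1
    · subst hj
      refine ⟨sv f g k * av f g k 0 v * (sv f g k)⁻¹, ?_⟩
      rw [map_mul, map_mul, map_inv, hθt, theta_av_zero f g k φ hk θ hθv, valneg1 k hk]
      rw [show ((k - 1 : ℕ) : ℤ) = (k : ℤ) - 1 by omega]
      group
    · refine ⟨av f g k (j + 1) v, ?_⟩
      rw [hθv (j + 1) v, valsucc k hk hj]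
      rw [show ((j.val + 1 : ℕ) : ℤ) = (j.val : ℤ) + 1 by push_cast; ring]
      group
  · by_cases he : e = -1
    · subst he
      show HNNExtension.t * θ (sv f g k) * HNNExtension.t⁻¹ ∈ θ.range
      refine ⟨sv f g k, ?_⟩
      rw [hθt]
      group
    · have h1 : (PresentedGroup.of (Sum.inr e) : P f g k) = (1 : P f g k) := tree_eq_one f g k he
      show HNNExtension.t * θ (PresentedGroup.of (Sum.inr e) : P f g k) * HNNExtension.t⁻¹ ∈ θ.range
      rw [h1, θ.map_one, mul_one, mul_inv_cancel]
      exact one_mem _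

include hk hθv hθt in
theorem conj_tinv_range (p : P f g k) :
    HNNExtension.t⁻¹ * θ p * HNNExtension.t ∈ θ.range := by
  haveI : NeZero k := ⟨hk.ne'⟩
  refine PresentedGroup.generated_by _
    (Subgroup.comap θ (Subgroup.comap (MulAut.conj HNNExtension.t⁻¹).toMonoidHom θ.range)) ?_ p
  rintro (⟨j, v⟩ | e) <;>
    simp only [Subgroup.mem_comap, MulEquiv.coe_toMonoidHom, MulAut.conj_apply, inv_inv]
  · show HNNExtension.t⁻¹ * θ (av f g k j v) * HNNExtension.t ∈ θ.range
    rw [hθv j v]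
    by_cases hj : j = 0
    · subst hj
      rw [ZMod.val_zero]
      refine ⟨(sv f g k)⁻¹ * av f g k (-1) v * sv f g k, ?_⟩
      rw [map_mul, map_mul, map_inv, hθt, theta_av_negone f g k φ hk θ hθv]
      rw [show ((k - 1 : ℕ) : ℤ) = (k : ℤ) - 1 by omega]
      group
    · have hj1 : j - 1 ≠ -1 := fun hc => hj (by linear_combination hc)
      have h2 := valsucc k hk hj1
      rw [sub_add_cancel] at h2
      refine ⟨av f g k (j - 1) v, ?_⟩
      rw [hθv (j - 1) v]
      rw [show ((j - 1 : ZMod k).val : ℤ) = (j.val : ℤ) - 1 by omega]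
      group
  · by_cases he : e = -1
    · subst he
      show HNNExtension.t⁻¹ * θ (sv f g k) * HNNExtension.t ∈ θ.range
      refine ⟨sv f g k, ?_⟩
      rw [hθt]
      group
    · have h1 : (PresentedGroup.of (Sum.inr e) : P f g k) = (1 : P f g k) := tree_eq_one f g k he
      show HNNExtension.t⁻¹ * θ (PresentedGroup.of (Sum.inr e)) * HNNExtension.t ∈ θ.range
      rw [h1, map_one, mul_one, inv_mul_cancel]
      exact one_mem _

include hk hθv hθt in
theorem conj_zpow_range (n : ℤ) :
    ∀ y ∈ θ.range, HNNExtension.t ^ n * y * HNNExtension.t ^ (-n) ∈ θ.range := by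
  induction n using Int.induction_on with
  | zero => intro y hy; simpa using hy
  | succ i ih =>
    intro y hy
    obtain ⟨q, hq⟩ := ih y hy
    rw [show HNNExtension.t ^ ((i : ℤ) + 1) * y * HNNExtension.t ^ (-((i : ℤ) + 1)) =
      HNNExtension.t * (HNNExtension.t ^ (i : ℤ) * y * HNNExtension.t ^ (-(i : ℤ))) *
        HNNExtension.t⁻¹ by group, ← hq]
    exact conj_t_range f g k φ hk θ hθv hθt q
  | pred i ih =>
    intro y hy
    obtain ⟨q, hq⟩ := ih y hy
    rw [show HNNExtension.t ^ (-(i : ℤ) - 1) * y * HNNExtension.t ^ (-(-(i : ℤ) - 1)) =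
      HNNExtension.t⁻¹ * (HNNExtension.t ^ (-(i : ℤ)) * y * HNNExtension.t ^ (-(-(i : ℤ)))) *
        HNNExtension.t by group, ← hq]
    exact conj_tinv_range f g k φ hk θ hθv hθt q

include hθt in
theorem tk_zpow_range (m : ℤ) :
    (HNNExtension.t : HNNExtension V f.range g.range φ) ^ ((k : ℤ) * m) ∈ θ.range :=
  ⟨sv f g k ^ m, by rw [map_zpow, hθt, ← zpow_mul]⟩

end Theta

end Stmt13

set_option maxHeartbeats 1000000 in
/-- The map θ from the fundamental group of the graph of groups over the
k-cycle Δ_k (vertex groups V_i ≅ V, edge groups E_i ≅ E, attaching maps copies of f, g) to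
the HNN extension G = ⟨V, t | t⁻¹ f(e) t = g(e)⟩, sending each v ∈ V_i to the corresponding
element v of V and each stable letter t_i to t (expressed in the spanning-tree model: the
generator v ∈ V_i goes to tⁱ v t⁻ⁱ and the remaining stable letter, for the edge from -1
to 0, goes to tᵏ), is an injective homomorphism with image the kernel of the homomorphism
ρ : G → ℤ/k determined by ρ(V) = 0, ρ(t) = 1. -/
theorem theta_injective_image_kernel
    (V E : Type*) [Group V] [Group E]
    (f g : E →* V) (hf : Function.Injective f) (hg : Function.Injective g)
    (φ : f.range ≃* g.range)
    (hφ : ∀ e : E, (φ ⟨f e, ⟨e, rfl⟩⟩ : V) = g e)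
    (k : ℕ) (hk : 0 < k)
    (ρ : HNNExtension V f.range g.range φ →* Multiplicative (ZMod k))
    (hρV : ∀ v : V, ρ (HNNExtension.of v) = 1)
    (hρt : ρ (HNNExtension.t (G := V) (A := f.range) (B := g.range) (φ := φ)) =
      Multiplicative.ofAdd (1 : ZMod k))
    (θ : gogPi1 (ι := ZMod k) (ε := ZMod k) (fun _ => V) (fun _ => E)
        (fun i => i) (fun i => i + 1) (fun _ => f) (fun _ => g) {e | e ≠ -1} →*
      HNNExtension V f.range g.range φ)
    (hθv : ∀ (i : ZMod k) (v : V),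
      θ (PresentedGroup.of (Sum.inl ⟨i, v⟩)) =
        HNNExtension.t ^ (i.val : ℤ) * HNNExtension.of v *
          (HNNExtension.t (G := V) (A := f.range) (B := g.range) (φ := φ)) ^ (-(i.val : ℤ)))
    (hθt : θ (PresentedGroup.of (Sum.inr (-1 : ZMod k))) =
      (HNNExtension.t (G := V) (A := f.range) (B := g.range) (φ := φ)) ^ (k : ℤ)) :
    Function.Injective θ ∧ MonoidHom.range θ = MonoidHom.ker ρ := by
  classical
  haveI : NeZero k := ⟨hk.ne'⟩
  have hθav : ∀ (i : ZMod k) (v : V), θ (Stmt13.av f g k i v) =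
      HNNExtension.t ^ (i.val : ℤ) * HNNExtension.of v * HNNExtension.t ^ (-(i.val : ℤ)) :=
    fun i v => hθv i v
  have hθsv : θ (Stmt13.sv f g k) = HNNExtension.t ^ (k : ℤ) := hθt
  -- Step 1 : the relation `t * g x * t⁻¹ = f x` holds in the HNN extension,
  -- because `θ` is a homomorphism.
  have relG : ∀ x : E,
      (HNNExtension.t (G := V) (A := f.range) (B := g.range) (φ := φ)) *
        HNNExtension.of (g x) * HNNExtension.t⁻¹ = HNNExtension.of (f x) := by
    intro x
    rcases eq_or_ne k 1 with hk1 | hk1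
    · subst hk1
      have h := congrArg θ (Stmt13.conj_sv f g 1 x)
      rw [map_mul, map_mul, map_inv, hθsv, hθav, hθav] at h
      rw [Subsingleton.elim (-1 : ZMod 1) 0, Subsingleton.elim (0 : ZMod 1) 0] at h
      rw [ZMod.val_zero] at h
      simp only [Nat.cast_zero, neg_zero, zpow_zero, one_mul, mul_one, inv_one,
        Nat.cast_one, zpow_one] at h
      rw [← h]
      group
    · haveI := Fact.mk (show 1 < k by omega)
      have h0 : (0 : ZMod k) ≠ -1 := by
        intro hc
        have h1 : ((1 : ℕ) : ZMod k) = 0 := by push_cast; linear_combination hc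
        rw [ZMod.natCast_eq_zero_iff] at h1
        have := Nat.le_of_dvd one_pos h1
        omega
      have h := congrArg θ (Stmt13.tree_rel f g k h0 x)
      rw [hθav, hθav, zero_add, ZMod.val_zero, ZMod.val_one] at h
      simp only [Nat.cast_zero, neg_zero, zpow_zero, one_mul, mul_one, inv_one,
        Nat.cast_one, zpow_one, zpow_neg] at h
      exact h.symm
  -- Step 2 : `g x` lies in the range of `f`, with `φ (g x) = f x`.
  have H1 : ∀ x : E, ∃ y : E, f y = g x ∧ g y = f x := by
    intro x
    have hmem : g x ∈ f.range := by
      by_contra hmem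
      have hchain : List.Chain'
          (fun a b : ℤˣ × V => a.2 ∈ HNNExtension.toSubgroup f.range g.range a.1 → a.1 = b.1)
          [((1 : ℤˣ), g x), ((-1 : ℤˣ), (1 : V))] := by
        refine List.isChain_cons_cons.2 ⟨fun hmem' => ?_, List.isChain_singleton _⟩
        exact absurd (by simpa using hmem') hmem
      have hprod : (HNNExtension.NormalWord.ReducedWord.mk 1 [((1 : ℤˣ), g x), ((-1 : ℤˣ), (1 : V))]
          hchain).prod φ ∈
          (HNNExtension.of.range : Subgroup (HNNExtension V f.range g.range φ)) := by
        refine ⟨f x, ?_⟩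
        rw [HNNExtension.NormalWord.ReducedWord.prod]
        simp only [List.map_cons, List.map_nil, List.prod_cons, List.prod_nil, map_one,
          Units.val_one, Units.val_neg, zpow_one, one_mul, mul_one, zpow_neg]
        rw [← relG x]
        try group
      have hnil := HNNExtension.ReducedWord.toList_eq_nil_of_mem_of_range φ _ hprod
      simp at hnil
    obtain ⟨y, hy⟩ := hmem
    refine ⟨y, hy, ?_⟩
    have h1 : HNNExtension.of ((φ ⟨g x, ⟨y, hy⟩⟩ : g.range) : V) =
        HNNExtension.t * HNNExtension.of (g x) * HNNExtension.t⁻¹ :=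
      HNNExtension.equiv_eq_conj (φ := φ) ⟨g x, ⟨y, hy⟩⟩
    rw [relG x] at h1
    have h2 : ((φ ⟨g x, ⟨y, hy⟩⟩ : g.range) : V) = f x := HNNExtension.of_injective φ h1
    have h3 : (⟨g x, ⟨y, hy⟩⟩ : f.range) = ⟨f y, ⟨y, rfl⟩⟩ := Subtype.ext hy.symm
    rw [h3] at h2
    rw [← hφ y]
    exact h2
  -- Step 3 : injectivity
  have hkey := Stmt13.key f g k φ H1 hφ hk θ hθav hθsv
  have hinj : Function.Injective θ := by
    refine (injective_iff_map_eq_one θ).2 fun p hp => ?_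
    have h := hkey p
    rw [hp, map_one] at h
    rw [Equiv.Perm.one_apply] at h
    simpa [Prod.ext_iff, eq_comm] using h
  -- Step 4 : the image of θ is killed by ρ
  have hker : ∀ p, ρ (θ p) = 1 := by
    intro p
    have hmem : p ∈ MonoidHom.ker (ρ.comp θ) := by
      refine PresentedGroup.generated_by _ (MonoidHom.ker (ρ.comp θ)) ?_ p
      rintro (⟨j, v⟩ | e)
      · show ρ (θ (Stmt13.av f g k j v)) = 1
        rw [hθav, map_mul, map_mul, map_zpow, map_zpow, hρV]
        simp [zpow_neg]
      · by_cases he : e = -1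
        · subst he
          show ρ (θ (Stmt13.sv f g k)) = 1
          rw [hθsv, map_zpow, hρt]
          apply Multiplicative.toAdd.injective
          rw [toAdd_zpow, toAdd_ofAdd, toAdd_one, zsmul_eq_mul, mul_one]
          simp [ZMod.natCast_self]
        · have h1 : (PresentedGroup.of (Sum.inr e) : Stmt13.P f g k) = (1 : Stmt13.P f g k) :=
            Stmt13.tree_eq_one f g k he
          show ρ (θ (PresentedGroup.of (Sum.inr e))) = 1
          rw [h1, map_one, map_one]
    exact hmem
  -- Step 5 : everything in the kernel of ρ is in the image of θ
  have hrange : ∀ y : HNNExtension V f.range g.range φ,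
      y * HNNExtension.t ^ (-(((Multiplicative.toAdd (ρ y)).val : ℕ) : ℤ)) ∈ θ.range := by
    intro y
    induction y using HNNExtension.induction_on with
    | of v =>
      rw [hρV v]
      simp only [toAdd_one, ZMod.val_zero, Nat.cast_zero, neg_zero, zpow_zero, mul_one]
      exact ⟨Stmt13.av f g k 0 v, Stmt13.theta_av_zero f g k φ hk θ hθav v⟩
    | t =>
      rw [hρt, toAdd_ofAdd]
      rcases eq_or_ne k 1 with hk1 | hk1
      · subst hk1
        rw [show ((1 : ZMod 1)).val = 0 from rfl]
        simp only [Nat.cast_zero, neg_zero, zpow_zero, mul_one]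
        exact ⟨Stmt13.sv f g 1, by rw [hθsv]; norm_num⟩
      · haveI := Fact.mk (show 1 < k by omega)
        rw [ZMod.val_one]
        simp only [Nat.cast_one, zpow_neg, zpow_one, mul_inv_cancel]
        exact one_mem _
    | mul x y ihx ihy =>
      set a := (Multiplicative.toAdd (ρ x)).val with ha
      set b := (Multiplicative.toAdd (ρ y)).val with hb
      have hab : (Multiplicative.toAdd (ρ (x * y))).val = (a + b) % k := by
        rw [map_mul, toAdd_mul, ZMod.val_add]
      rw [hab]
      have hsplit : x * y * HNNExtension.t ^ (-(((a + b) % k : ℕ) : ℤ)) =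
          (x * HNNExtension.t ^ (-(a : ℤ))) *
          (HNNExtension.t ^ (a : ℤ) * (y * HNNExtension.t ^ (-(b : ℤ))) *
            HNNExtension.t ^ (-(a : ℤ))) *
          HNNExtension.t ^ ((a : ℤ) + (b : ℤ) - (((a + b) % k : ℕ) : ℤ)) := by group
      rw [hsplit]
      refine mul_mem (mul_mem ihx
        (Stmt13.conj_zpow_range f g k φ hk θ hθav hθsv (a : ℤ) _ ihy)) ?_
      rw [show (a : ℤ) + (b : ℤ) - (((a + b) % k : ℕ) : ℤ) = (k : ℤ) * (((a + b) / k : ℕ) : ℤ) by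
        have := Nat.div_add_mod (a + b) k; omega]
      exact Stmt13.tk_zpow_range f g k φ θ hθsv _
    | inv x ihx =>
      set a := (Multiplicative.toAdd (ρ x)).val with ha
      set c := (Multiplicative.toAdd (ρ x⁻¹)).val with hc
      have hdvd : k ∣ a + c := by
        have h2 : ((a + c : ℕ) : ZMod k) = 0 := by
          push_cast
          rw [ha, hc, ZMod.natCast_zmod_val, ZMod.natCast_zmod_val, map_inv, toAdd_inv]
          ring
        rwa [ZMod.natCast_eq_zero_iff] at h2
      obtain ⟨m, hm⟩ := hdvd
      have hsplit : x⁻¹ * HNNExtension.t ^ (-(c : ℤ)) =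
          (HNNExtension.t ^ (-(a : ℤ)) * (x * HNNExtension.t ^ (-(a : ℤ)))⁻¹ *
            HNNExtension.t ^ (-(-(a : ℤ)))) * HNNExtension.t ^ (-((a : ℤ) + (c : ℤ))) := by
        group
      rw [hsplit]
      refine mul_mem
        (Stmt13.conj_zpow_range f g k φ hk θ hθav hθsv (-(a : ℤ)) _ (inv_mem ihx)) ?_
      rw [show -((a : ℤ) + (c : ℤ)) = (k : ℤ) * (-(m : ℤ)) by
        rw [show ((a : ℤ) + (c : ℤ)) = ((a + c : ℕ) : ℤ) by push_cast; ring, hm]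
        push_cast; ring]
      exact Stmt13.tk_zpow_range f g k φ θ hθsv _
  refine ⟨hinj, le_antisymm ?_ ?_⟩
  · rintro y ⟨p, rfl⟩
    exact hker p
  · intro y hy
    have h := hrange y
    rw [MonoidHom.mem_ker] at hy
    rw [hy] at h
    simpa using h
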